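/- arXiv:2007.07958 — 2 statements merged into one kernel-verified Lean document; each statement's English description precedes it below -/
import Mathlib

section
/- If a POVM {Π₁*,…,Π_M*} satisfies the Holevo–Yuen–Kennedy–Lax conditions with Lagrange operator Λ = Σᵢ pᵢ τᵢ Πᵢ*, then the minimum error probability equals 1 − tr(Λ). -/
open ComplexOrder

lemma trace_nonneg_of_psd {n : ℕ} {A : Matrix (Fin n) (Fin n) ℂ} (hA : A.PosSemidef) :
    0 ≤ A.trace := by
  rw [Matrix.trace]
  apply Finset.sum_nonneg
  intro i _
  exact hA.diag_nonneg

open scoped MatrixOrder in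
lemma trace_mul_nonneg_of_psd {n : ℕ} {A B : Matrix (Fin n) (Fin n) ℂ}
    (hA : A.PosSemidef) (hB : B.PosSemidef) : 0 ≤ (A * B).trace := by
  have hS : (CFC.sqrt B).PosSemidef := Matrix.nonneg_iff_posSemidef.mp (CFC.sqrt_nonneg B)
  have hBe : B = CFC.sqrt B * CFC.sqrt B := (CFC.sqrt_mul_sqrt_self B hB.nonneg).symm
  rw [hBe, ← mul_assoc, Matrix.trace_mul_cycle]
  have : (CFC.sqrt B * A * CFC.sqrt B).PosSemidef := by
    have := hA.mul_mul_conjTranspose_same (CFC.sqrt B)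
    rwa [hS.isHermitian.eq] at this
  exact trace_nonneg_of_psd this

/-- If a POVM satisfies the Holevo–Yuen–Kennedy–Lax conditions with Lagrange operator
`Λ = Σᵢ pᵢ τᵢ Πᵢ*`, then the minimum error probability equals `1 − tr(Λ)`. -/
theorem hykl_min_error {n M : ℕ}
    (τ : Fin M → Matrix (Fin n) (Fin n) ℂ)
    (hτ : ∀ i, (τ i).PosSemidef ∧ (τ i).trace = 1)
    (p : Fin M → ℝ) (hp : ∀ i, 0 ≤ p i) (hpsum : ∑ i, p i = 1)
    (Ps : Fin M → Matrix (Fin n) (Fin n) ℂ)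
    (hPs : ∀ i, (Ps i).PosSemidef)
    (hPssum : ∑ i, Ps i = 1)
    (Λ : Matrix (Fin n) (Fin n) ℂ)
    (hΛdef : Λ = ∑ i, (p i : ℂ) • (τ i * Ps i))
    (hΛherm : Λ.IsHermitian)
    (hstat : ∀ m, (Λ - (p m : ℂ) • τ m) * Ps m = 0)
    (hpos : ∀ m, (Λ - (p m : ℂ) • τ m).PosSemidef) :
    IsLeast {e : ℂ | ∃ Pov : Fin M → Matrix (Fin n) (Fin n) ℂ,
        (∀ i, (Pov i).PosSemidef) ∧ (∑ i, Pov i = 1) ∧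
        e = 1 - ∑ m, (p m : ℂ) * (τ m * Pov m).trace}
      (1 - Λ.trace) := by
  constructor
  · exact ⟨Ps, hPs, hPssum, by
      simp [hΛdef, Matrix.trace_sum, Matrix.trace_smul, smul_eq_mul]⟩
  · rintro e ⟨Pov, hPov, hPovsum, rfl⟩
    have key : ∑ m, (p m : ℂ) * (τ m * Pov m).trace ≤ Λ.trace := by
      rw [← sub_nonneg]
      have heq : Λ.trace - ∑ m, (p m : ℂ) * (τ m * Pov m).trace
          = ∑ m, ((Λ - (p m : ℂ) • τ m) * Pov m).trace := by
        simp only [Matrix.sub_mul, Matrix.trace_sub, Matrix.smul_mul, Matrix.trace_smul,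
          smul_eq_mul, Finset.sum_sub_distrib]
        congr 1
        rw [← Matrix.trace_sum, ← Matrix.mul_sum, hPovsum, mul_one]
      rw [heq]
      exact Finset.sum_nonneg fun m _ => trace_mul_nonneg_of_psd (hpos m) (hPov m)
    exact sub_le_sub_left key 1
end

section
/- Let |φ₁⟩,…,|φ_M⟩ be unit vectors in ℂⁿ such that Σ_m |φ_m⟩⟨φ_m| = (M/n) I. Then the POVM Π_m = (n/M)|φ_m⟩⟨φ_m| satisfies the Holevo–Yuen–Kennedy–Lax optimality conditions for discriminating the equiprobable states W_m = |φ_m⟩⟨φ_m|, and the minimum error probability equals 1 − n/M. -/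
open ComplexOrder Matrix

variable {n : ℕ}

lemma vmv_psd (v : Fin n → ℂ) : (vecMulVec v (star v)).PosSemidef := by
  have : vecMulVec v (star v) = replicateCol Unit v * (replicateCol Unit v)ᴴ := by
    rw [conjTranspose_replicateCol, ← vecMulVec_eq Unit]
  rw [this]
  exact Matrix.posSemidef_self_mul_conjTranspose _

lemma vmv_mul_self (v : Fin n → ℂ) (h : ∑ i, v i * star (v i) = 1) :
    vecMulVec v (star v) * vecMulVec v (star v) = vecMulVec v (star v) := by
  ext i j
  simp only [Matrix.mul_apply, Matrix.vecMulVec_apply, Pi.star_apply]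
  calc ∑ k, (v i * star (v k)) * (v k * star (v j))
      = (v i * star (v j)) * ∑ k, v k * star (v k) := by
        rw [Finset.mul_sum]; exact Finset.sum_congr rfl fun k _ => by ring
    _ = v i * star (v j) := by rw [h, mul_one]

lemma vmv_trace (v : Fin n → ℂ) (h : ∑ i, v i * star (v i) = 1) :
    (vecMulVec v (star v)).trace = 1 := by
  simp only [Matrix.trace, Matrix.diag, vecMulVec_apply, Pi.star_apply]
  exact h

lemma psd_smul {A : Matrix (Fin n) (Fin n) ℂ} (hA : A.PosSemidef) {r : ℝ} (hr : 0 ≤ r) :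
    ((r : ℂ) • A).PosSemidef := by
  constructor
  · rw [IsHermitian, conjTranspose_smul, hA.1.eq]
    simp
  · intro x
    exact (hA.smul (a := (r : ℂ)) (by exact_mod_cast hr)).2 x

lemma psd_trace_nonneg {A : Matrix (Fin n) (Fin n) ℂ} (hA : A.PosSemidef) :
    0 ≤ A.trace := by
  apply Finset.sum_nonneg
  intro i _
  have := hA.2 (Finsupp.single i 1)
  simpa [Finsupp.sum_single_index] using this

open scoped MatrixOrder in
lemma psd_trace_mul_nonneg {A B : Matrix (Fin n) (Fin n) ℂ}
    (hA : A.PosSemidef) (hB : B.PosSemidef) : 0 ≤ (A * B).trace := by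
  have hS : (CFC.sqrt A).PosSemidef := (CFC.sqrt_nonneg A).posSemidef
  have : A * B = CFC.sqrt A * (CFC.sqrt A * B) := by rw [← mul_assoc, CFC.sqrt_mul_sqrt_self A hA.nonneg]
  rw [this, trace_mul_comm]
  have : CFC.sqrt A * B * CFC.sqrt A = CFC.sqrt A * B * (CFC.sqrt A)ᴴ := by rw [hS.1.eq]
  rw [this]
  exact psd_trace_nonneg (hB.mul_mul_conjTranspose_same _)

/-- If unit vectors `φ₁,…,φ_M` in `ℂⁿ` satisfy `Σ |φ_m⟩⟨φ_m| = (M/n) I`, then the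
POVM `Π_m = (n/M)|φ_m⟩⟨φ_m|` satisfies the Holevo–Yuen–Kennedy–Lax conditions for
discriminating the equiprobable states `W_m = |φ_m⟩⟨φ_m|`, and the minimum error
probability equals `1 − n/M`. -/
theorem sqrt_measurement_optimal {n M : ℕ} (hn : 0 < n) (hM : n ≤ M)
    (φ : Fin M → (Fin n → ℂ))
    (hunit : ∀ m, ∑ i, φ m i * star (φ m i) = 1)
    (hres : ∑ m, Matrix.vecMulVec (φ m) (star (φ m))
      = ((M : ℂ) / (n : ℂ)) • (1 : Matrix (Fin n) (Fin n) ℂ))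
    (W Pov : Fin M → Matrix (Fin n) (Fin n) ℂ)
    (hWdef : ∀ m, W m = Matrix.vecMulVec (φ m) (star (φ m)))
    (hPovdef : ∀ m, Pov m = ((n : ℂ) / (M : ℂ)) • Matrix.vecMulVec (φ m) (star (φ m)))
    (Λ : Matrix (Fin n) (Fin n) ℂ)
    (hΛdef : Λ = ∑ m, (1 / (M : ℂ)) • (W m * Pov m)) :
    (∀ m, (Pov m).PosSemidef) ∧
    (∑ m, Pov m = 1) ∧
    Λ.IsHermitian ∧
    (∀ m, (Λ - (1 / (M : ℂ)) • W m) * Pov m = 0) ∧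
    (∀ m, (Λ - (1 / (M : ℂ)) • W m).PosSemidef) ∧
    IsLeast {e : ℂ | ∃ Q : Fin M → Matrix (Fin n) (Fin n) ℂ,
        (∀ i, (Q i).PosSemidef) ∧ (∑ i, Q i = 1) ∧
        e = 1 - ∑ m, (1 / (M : ℂ)) * (W m * Q m).trace}
      (1 - (n : ℂ) / (M : ℂ)) := by
  have hMpos : 0 < M := lt_of_lt_of_le hn hM
  have hnC : (n : ℂ) ≠ 0 := Nat.cast_ne_zero.mpr hn.ne'
  have hMC : (M : ℂ) ≠ 0 := Nat.cast_ne_zero.mpr hMpos.ne'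
  set P : Fin M → Matrix (Fin n) (Fin n) ℂ := fun m => vecMulVec (φ m) (star (φ m)) with hPdef
  have hP2 : ∀ m, P m * P m = P m := fun m => vmv_mul_self (φ m) (hunit m)
  have hPpsd : ∀ m, (P m).PosSemidef := fun m => vmv_psd (φ m)
  have hPH : ∀ m, (P m)ᴴ = P m := fun m => (hPpsd m).1.eq
  -- Λ = (1/M) • 1
  have hΛ : Λ = (1 / (M : ℂ)) • (1 : Matrix (Fin n) (Fin n) ℂ) := by
    rw [hΛdef]
    have : ∀ m, (1 / (M : ℂ)) • (W m * Pov m)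
        = (((n : ℂ) / (M : ℂ)^2)) • P m := by
      intro m
      rw [hWdef, hPovdef, Matrix.mul_smul, hP2, smul_smul]
      ring_nf
    simp_rw [this, ← Finset.smul_sum]
    rw [hres, smul_smul]
    congr 1
    field_simp
  -- Λ - (1/M) W m = (1/M) • (1 - P m)
  have hΛW : ∀ m, Λ - (1 / (M : ℂ)) • W m = (1 / (M : ℂ)) • (1 - P m) := by
    intro m
    rw [hΛ, hWdef, smul_sub]
  have hIP : ∀ m, ((1 : Matrix (Fin n) (Fin n) ℂ) - P m).PosSemidef := by
    intro m
    have h1 : ((1 : Matrix (Fin n) (Fin n) ℂ) - P m)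
        = ((1 : Matrix (Fin n) (Fin n) ℂ) - P m)ᴴ * (1 - P m) := by
      rw [conjTranspose_sub, conjTranspose_one, hPH, sub_mul, mul_sub, mul_sub,
        one_mul, mul_one, one_mul, hP2]
      simp
    rw [h1]
    exact Matrix.posSemidef_conjTranspose_mul_self _
  have hinvM : (0:ℝ) ≤ 1 / (M:ℝ) := by positivity
  have hcast : ((1 / (M:ℝ) : ℝ) : ℂ) = 1 / (M:ℂ) := by push_cast; ring
  have hPovPsd : ∀ m, (Pov m).PosSemidef := by
    intro m
    rw [hPovdef]
    have : ((n:ℂ)/(M:ℂ)) = (((n:ℝ)/(M:ℝ) : ℝ) : ℂ) := by push_cast; ring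
    rw [this]
    exact psd_smul (hPpsd m) (by positivity)
  have hPovSum : ∑ m, Pov m = 1 := by
    simp_rw [hPovdef]
    rw [← Finset.smul_sum, hres, smul_smul]
    rw [div_mul_div_comm, mul_comm ((n:ℂ)) ((M:ℂ)), div_self (by exact mul_ne_zero hMC hnC),
      one_smul]
  refine ⟨hPovPsd, hPovSum, ?_, ?_, ?_, ?_, ?_⟩
  · rw [hΛ]
    show _ = _
    rw [conjTranspose_smul, conjTranspose_one]
    congr 1
    simp
  · intro m
    rw [hΛW, hPovdef, Matrix.smul_mul, Matrix.mul_smul, smul_smul, sub_mul, one_mul, hP2,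
      sub_self, smul_zero]
  · intro m
    rw [hΛW, ← hcast]
    exact psd_smul (hIP m) hinvM
  · -- membership
    refine ⟨Pov, hPovPsd, hPovSum, ?_⟩
    · have : ∀ m, (1 / (M : ℂ)) * (W m * Pov m).trace = (n:ℂ)/(M:ℂ)^2 := by
        intro m
        rw [hWdef, hPovdef, Matrix.mul_smul, hP2, trace_smul, vmv_trace (φ m) (hunit m),
          smul_eq_mul, mul_one]
        ring
      simp_rw [this]
      rw [Finset.sum_const, Finset.card_univ, Fintype.card_fin, nsmul_eq_mul]
      congr 1
      field_simp
  · -- lower bound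
    rintro e ⟨Q, hQpsd, hQsum, he⟩
    have key : ∀ m, (1 / (M : ℂ)) * (W m * Q m).trace ≤ (1 / (M : ℂ)) * (Q m).trace := by
      intro m
      have h0 : 0 ≤ (((1 / (M : ℂ)) • ((1 : Matrix (Fin n) (Fin n) ℂ) - P m)) * Q m).trace := by
        refine psd_trace_mul_nonneg ?_ (hQpsd m)
        rw [← hcast]; exact psd_smul (hIP m) hinvM
      rw [Matrix.smul_mul, trace_smul, sub_mul, one_mul, trace_sub, smul_eq_mul,
        mul_sub] at h0
      have := sub_nonneg.mp h0
      rw [hWdef]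
      exact this
    have hsum : ∑ m, (1 / (M : ℂ)) * (W m * Q m).trace ≤ (n:ℂ)/(M:ℂ) := by
      calc ∑ m, (1 / (M : ℂ)) * (W m * Q m).trace
          ≤ ∑ m, (1 / (M : ℂ)) * (Q m).trace := Finset.sum_le_sum fun m _ => key m
        _ = (n:ℂ)/(M:ℂ)  := by
            rw [← Finset.mul_sum, ← trace_sum, hQsum, trace_one]
            field_simp
            simp
    rw [he]
    exact sub_le_sub_left hsum 1
end
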